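/- Let B be a k×d random matrix with i.i.d. N(0,1) entries, a>0, P = a BᵀB. Then for all non-random u, v ∈ ℝᵈ, the expected sample covariance satisfies E[C_{Pu,Pv}] = a²·k·(d+k)·C_{u,v} + a²·k·d·μ_u μ_v, where C_{x,y} = (1/(d−1))Σ_m (x_m − μ_x)(y_m − μ_y). -/

import Mathlib

open MeasureTheory ProbabilityTheory BigOperators Matrix

/- ## Auxiliary: Gaussian moments -/

lemma gauss_integrable' (n : ℕ) : Integrable (fun x : ℝ => x ^ n * Real.exp (-(2⁻¹:ℝ) * x ^ 2)) := by
  have hs : (-1:ℝ) < (n:ℝ) := lt_of_lt_of_le (by norm_num) (Nat.cast_nonneg n)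
  have h := integrable_rpow_mul_exp_neg_mul_sq (b := 2⁻¹) (by norm_num) hs
  simpa [Real.rpow_natCast] using h

noncomputable def gmi (n : ℕ) : ℝ := ∫ x : ℝ, x ^ n * Real.exp (-(2⁻¹:ℝ) * x ^ 2)

lemma gmi_zero : gmi 0 = Real.sqrt (2 * Real.pi) := by
  simp only [gmi, pow_zero, one_mul]
  rw [integral_gaussian]
  norm_num [mul_comm]

lemma gmi_one : gmi 1 = 0 := by
  have hd : ∀ x : ℝ, HasDerivAt (fun x : ℝ => -Real.exp (-(2⁻¹:ℝ) * x ^ 2))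
      (x ^ 1 * Real.exp (-(2⁻¹:ℝ) * x ^ 2)) x := by
    intro x
    have := (((hasDerivAt_pow 2 x).const_mul (-(2⁻¹:ℝ))).exp).neg
    refine this.congr_deriv ?_
    ring
  exact integral_eq_zero_of_hasDerivAt_of_integrable hd (gauss_integrable' 1)
    ((gauss_integrable' 0).neg.congr (Filter.EventuallyEq.of_eq (by funext x; simp [neg_mul])))

lemma gmi_rec (n : ℕ) : gmi (n + 2) = (n + 1) * gmi n := by
  have hd : ∀ x : ℝ, HasDerivAt (fun x : ℝ => -(x ^ (n+1) * Real.exp (-(2⁻¹:ℝ) * x ^ 2)))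
      (x ^ (n+2) * Real.exp (-(2⁻¹:ℝ) * x ^ 2) - (n+1) * (x ^ n * Real.exp (-(2⁻¹:ℝ) * x ^ 2))) x := by
    intro x
    have h1 := ((hasDerivAt_pow (n+1) x).mul (((hasDerivAt_pow 2 x).const_mul (-(2⁻¹:ℝ))).exp)).neg
    refine h1.congr_deriv ?_
    push_cast
    ring
  have hint : Integrable (fun x : ℝ => x ^ (n+2) * Real.exp (-(2⁻¹:ℝ) * x ^ 2)
      - (n+1) * (x ^ n * Real.exp (-(2⁻¹:ℝ) * x ^ 2))) :=
    (gauss_integrable' (n+2)).sub ((gauss_integrable' n).const_mul _)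
  have h0 := integral_eq_zero_of_hasDerivAt_of_integrable hd hint ((gauss_integrable' (n+1)).neg)
  rw [integral_sub (gauss_integrable' (n+2)) ((gauss_integrable' n).const_mul _),
    MeasureTheory.integral_const_mul] at h0
  have : gmi (n+2) - (n+1) * gmi n = 0 := h0
  linarith

lemma pdf_mul_eq (n : ℕ) : ∀ x : ℝ, gaussianPDFReal 0 1 x * x ^ n
    = (Real.sqrt (2 * Real.pi))⁻¹ * (x ^ n * Real.exp (-(2⁻¹:ℝ) * x ^ 2)) := by
  intro x
  simp only [gaussianPDFReal]
  norm_num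
  ring_nf

lemma gaussianReal_std : gaussianReal 0 1
    = (volume : Measure ℝ).withDensity fun x => (((gaussianPDFReal 0 1 x).toNNReal : NNReal) : ENNReal) := by
  rw [gaussianReal_of_var_ne_zero _ one_ne_zero]
  rfl

lemma pow_integrable_gauss (n : ℕ) : Integrable (fun x : ℝ => x ^ n) (gaussianReal 0 1) := by
  rw [gaussianReal_std, integrable_withDensity_iff_integrable_smul
    (measurable_gaussianPDFReal 0 1).real_toNNReal]
  refine ((gauss_integrable' n).const_mul ((Real.sqrt (2 * Real.pi))⁻¹)).congr
    (Filter.EventuallyEq.of_eq (funext fun x => ?_))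
  rw [NNReal.smul_def, Real.coe_toNNReal _ (gaussianPDFReal_nonneg 0 1 x), smul_eq_mul,
    ← pdf_mul_eq n x]

lemma gauss_moment (n : ℕ) : ∫ x, x ^ n ∂(gaussianReal 0 1)
    = (Real.sqrt (2 * Real.pi))⁻¹ * gmi n := by
  rw [gaussianReal_std, integral_withDensity_eq_integral_smul
    (measurable_gaussianPDFReal 0 1).real_toNNReal]
  rw [gmi, ← integral_const_mul]
  congr 1 with x
  rw [NNReal.smul_def, Real.coe_toNNReal _ (gaussianPDFReal_nonneg 0 1 x), smul_eq_mul,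
    pdf_mul_eq n x]

noncomputable def nu : ℕ → ℝ
  | 0 => 1 | 1 => 0 | 2 => 1 | 3 => 0 | 4 => 3 | _ => 0

@[simp] lemma nu0 : nu 0 = 1 := rfl
@[simp] lemma nu1 : nu 1 = 0 := rfl
@[simp] lemma nu2 : nu 2 = 1 := rfl
@[simp] lemma nu3 : nu 3 = 0 := rfl
@[simp] lemma nu4 : nu 4 = 3 := rfl

lemma sqrt_two_pi_ne : Real.sqrt (2 * Real.pi) ≠ 0 := by positivity

lemma gmi_two : gmi 2 = gmi 0 := by
  have := gmi_rec 0; norm_num at this; exact this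

lemma gmi_three : gmi 3 = 0 := by
  have := gmi_rec 1; norm_num [gmi_one] at this; exact this

lemma gmi_four : gmi 4 = 3 * gmi 0 := by
  have := gmi_rec 2; norm_num [gmi_two] at this; linarith

lemma gmi_zero_ne : (Real.sqrt (2 * Real.pi))⁻¹ * gmi 0 = 1 := by
  rw [gmi_zero, inv_mul_cancel₀ sqrt_two_pi_ne]

lemma gauss_moment_nu (n : ℕ) (hn : n ≤ 4) : ∫ x, x ^ n ∂(gaussianReal 0 1) = nu n := by
  interval_cases n
  · rw [gauss_moment]; simpa [nu] using gmi_zero_ne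
  · rw [gauss_moment, gmi_one]; simp [nu]
  · rw [gauss_moment, gmi_two]; simpa [nu] using gmi_zero_ne
  · rw [gauss_moment, gmi_three]; simp [nu]
  · rw [gauss_moment, gmi_four]
    show _ * (3 * gmi 0) = nu 4
    rw [← mul_assoc, mul_comm _ (3:ℝ), mul_assoc, gmi_zero_ne]; simp [nu]

/- ## Auxiliary: independence -/

lemma map_pow_integrable {Ω : Type} [MeasureSpace Ω] {X : Ω → ℝ} (hm : Measurable X)
    (hg : Measure.map X ℙ = gaussianReal 0 1)
    {n : ℕ} (hInt : Integrable (fun x : ℝ => x ^ n) (gaussianReal 0 1)) :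
    Integrable (fun ω => X ω ^ n) ℙ := by
  rw [← hg] at hInt
  exact (integrable_map_measure (hInt.1) hm.aemeasurable).mp hInt

lemma map_pow_integral {Ω : Type} [MeasureSpace Ω] {X : Ω → ℝ} (hm : Measurable X)
    (hg : Measure.map X ℙ = gaussianReal 0 1) (n : ℕ) :
    ∫ ω, X ω ^ n = ∫ x, x ^ n ∂(gaussianReal 0 1) := by
  rw [← hg, integral_map hm.aemeasurable]
  exact (measurable_id.pow_const n).aestronglyMeasurable

lemma indep_prod {Ω : Type} [MeasureSpace Ω] [IsProbabilityMeasure (ℙ : Measure Ω)]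
    {ι : Type*} (Y : ι → Ω → ℝ)
    (h : iIndepFun Y ℙ) (hm : ∀ i, Measurable (Y i))
    (hi : ∀ i, Integrable (Y i) ℙ) (s : Finset ι) :
    Integrable (fun ω => ∏ i ∈ s, Y i ω) ℙ ∧
      (∫ ω, ∏ i ∈ s, Y i ω) = ∏ i ∈ s, ∫ ω, Y i ω := by
  classical
  induction s using Finset.induction_on with
  | empty => simp
  | insert i s hnotmem ih =>
    have hIF : IndepFun (∏ j ∈ s, Y j) (Y i) ℙ :=
      h.indepFun_finsetProd_of_notMem hm hnotmem
    have hps : Integrable (∏ j ∈ s, Y j) ℙ := by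
      refine ih.1.congr (Filter.EventuallyEq.of_eq ?_)
      funext ω; simp [Finset.prod_apply]
    have hprod : Integrable ((∏ j ∈ s, Y j) * Y i) ℙ := hIF.integrable_mul hps (hi i)
    constructor
    · refine hprod.congr (Filter.EventuallyEq.of_eq ?_)
      funext ω
      simp [Finset.prod_insert hnotmem, Finset.prod_apply, mul_comm]
    · have := hIF.integral_mul_eq_mul_integral hps.aestronglyMeasurable (hi i).aestronglyMeasurable
      calc (∫ ω, ∏ j ∈ insert i s, Y j ω)
          = ∫ ω, ((∏ j ∈ s, Y j) * Y i) ω := by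
            congr 1; funext ω; simp [Finset.prod_insert hnotmem, Finset.prod_apply, mul_comm]
        _ = (∫ ω, (∏ j ∈ s, Y j) ω) * ∫ ω, Y i ω := this
        _ = ∏ j ∈ insert i s, ∫ ω, Y j ω := by
            rw [Finset.prod_insert hnotmem, ← ih.2]
            rw [mul_comm]
            congr 1
            · congr 1; funext ω; simp [Finset.prod_apply]

set_option maxHeartbeats 1000000 in
lemma comb {ι : Type*} [Fintype ι] [DecidableEq ι] (p1 p2 p3 p4 : ι) :
    (∏ i, nu ((if p1 = i then 1 else 0) + (if p2 = i then 1 else 0)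
      + (if p3 = i then 1 else 0) + (if p4 = i then 1 else 0)))
    = (if p1 = p2 then (1:ℝ) else 0) * (if p3 = p4 then 1 else 0)
      + (if p1 = p3 then 1 else 0) * (if p2 = p4 then 1 else 0)
      + (if p1 = p4 then 1 else 0) * (if p2 = p3 then 1 else 0) := by
  have hres : (∏ i, nu ((if p1 = i then 1 else 0) + (if p2 = i then 1 else 0)
      + (if p3 = i then 1 else 0) + (if p4 = i then 1 else 0)))
      = ∏ i ∈ ({p1, p2, p3, p4} : Finset ι), nu ((if p1 = i then 1 else 0)
        + (if p2 = i then 1 else 0) + (if p3 = i then 1 else 0) + (if p4 = i then 1 else 0)) := by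
    refine (Finset.prod_subset (Finset.subset_univ _) fun i _ hi => ?_).symm
    simp only [Finset.mem_insert, Finset.mem_singleton, not_or] at hi
    obtain ⟨h1, h2, h3, h4⟩ := hi
    rw [if_neg (fun h => h1 h.symm), if_neg (fun h => h2 h.symm),
      if_neg (fun h => h3 h.symm), if_neg (fun h => h4 h.symm)]
    norm_num
  rw [hres]
  by_cases h12 : p1 = p2 <;> by_cases h13 : p1 = p3 <;> by_cases h14 : p1 = p4 <;>
    by_cases h23 : p2 = p3 <;> by_cases h24 : p2 = p4 <;> by_cases h34 : p3 = p4 <;>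
    simp_all <;> (try simp_all [eq_comm]) <;> (try linarith)

lemma E4 {Ω : Type} [MeasureSpace Ω] [IsProbabilityMeasure (ℙ : Measure Ω)]
    {ι : Type} [Fintype ι] [DecidableEq ι] (X : ι → Ω → ℝ)
    (hindep : iIndepFun X ℙ)
    (hm : ∀ i, Measurable (X i))
    (hg : ∀ i, Measure.map (X i) ℙ = gaussianReal 0 1) (p1 p2 p3 p4 : ι) :
    Integrable (fun ω => X p1 ω * X p2 ω * X p3 ω * X p4 ω) ℙ ∧
    ∫ ω, X p1 ω * X p2 ω * X p3 ω * X p4 ω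
      = (if p1 = p2 then (1:ℝ) else 0) * (if p3 = p4 then 1 else 0)
      + (if p1 = p3 then 1 else 0) * (if p2 = p4 then 1 else 0)
      + (if p1 = p4 then 1 else 0) * (if p2 = p3 then 1 else 0) := by
  classical
  set c : ι → ℕ := fun i => (if p1 = i then 1 else 0) + (if p2 = i then 1 else 0)
      + (if p3 = i then 1 else 0) + (if p4 = i then 1 else 0) with hc
  have hcle : ∀ i, c i ≤ 4 := by
    intro i
    have : ∀ p : ι, (if p = i then 1 else 0) ≤ 1 := fun p => by split <;> norm_num
    simp only [hc]
    have h1 := this p1; have h2 := this p2; have h3 := this p3; have h4 := this p4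
    omega
  set Y : ι → Ω → ℝ := fun i ω => X i ω ^ c i with hY
  have hYindep : iIndepFun Y ℙ :=
    hindep.comp (fun i x => x ^ c i) (fun i => measurable_id.pow_const (c i))
  have hYm : ∀ i, Measurable (Y i) := fun i => (hm i).pow_const (c i)
  have hYint : ∀ i, Integrable (Y i) ℙ := fun i =>
    map_pow_integrable (hm i) (hg i) (pow_integrable_gauss (c i))
  have key := indep_prod Y hYindep hYm hYint Finset.univ
  have hpt : ∀ ω, X p1 ω * X p2 ω * X p3 ω * X p4 ω = ∏ i, Y i ω := by
    intro ω
    simp only [hY, hc, pow_add, Finset.prod_mul_distrib, pow_ite, pow_one, pow_zero,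
      Finset.prod_ite_eq, Finset.mem_univ, if_true]
  have hmom : ∀ i, ∫ ω, Y i ω = nu (c i) := fun i => by
    rw [hY]
    rw [map_pow_integral (hm i) (hg i) (c i), gauss_moment_nu _ (hcle i)]
  constructor
  · exact key.1.congr (Filter.EventuallyEq.of_eq (funext fun ω => (hpt ω).symm))
  · calc ∫ ω, X p1 ω * X p2 ω * X p3 ω * X p4 ω = ∫ ω, ∏ i, Y i ω := by
          congr 1; funext ω; exact hpt ω
      _ = ∏ i, ∫ ω, Y i ω := key.2
      _ = ∏ i, nu (c i) := Finset.prod_congr rfl fun i _ => hmom i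
      _ = _ := comb p1 p2 p3 p4

/- ## sampleCov identity -/

noncomputable def sampleMean {d : ℕ} (x : Fin d → ℝ) : ℝ := (∑ m, x m) / d

noncomputable def sampleCov {d : ℕ} (x y : Fin d → ℝ) : ℝ :=
  (∑ m, (x m - sampleMean x) * (y m - sampleMean y)) / ((d : ℝ) - 1)

noncomputable def proj {k d : ℕ} (a : ℝ) (B : Matrix (Fin k) (Fin d) ℝ)
    (u : Fin d → ℝ) : Fin d → ℝ := a • (Bᵀ * B).mulVec u

lemma sampleCov_eq {d : ℕ} (hd : (d:ℝ) ≠ 0) (x y : Fin d → ℝ) :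
    sampleCov x y = ((∑ m, x m * y m) - d * (sampleMean x * sampleMean y)) / ((d:ℝ)-1) := by
  unfold sampleCov sampleMean
  congr 1
  have expand : ∀ m, (x m - (∑ i, x i)/d) * (y m - (∑ i, y i)/d)
      = x m * y m - ((∑ i, x i)/d) * y m - ((∑ i, y i)/d) * x m + ((∑ i, x i)/d)*((∑ i, y i)/d) := by
    intro m; ring
  rw [Finset.sum_congr rfl fun m _ => expand m]
  simp only [Finset.sum_add_distrib, Finset.sum_sub_distrib, ← Finset.mul_sum,
    Finset.sum_const, Finset.card_univ, Fintype.card_fin, nsmul_eq_mul]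
  field_simp
  ring

/- ## Main theorem -/

theorem stmt6
    {Ω : Type} [MeasureSpace Ω] [IsProbabilityMeasure (ℙ : Measure Ω)]
    {k d : ℕ} (hk : 1 ≤ k) (hd : 2 ≤ d)
    (B : Ω → Matrix (Fin k) (Fin d) ℝ)
    (hmeas : ∀ j m, Measurable fun ω => B ω j m)
    (hindep : iIndepFun
      (fun (p : Fin k × Fin d) ω => B ω p.1 p.2) ℙ)
    (hgauss : ∀ j m, Measure.map (fun ω => B ω j m) ℙ = gaussianReal 0 1)
    (a : ℝ) (ha : 0 < a) (u v : Fin d → ℝ) :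
    ∫ ω, sampleCov (proj a (B ω) u) (proj a (B ω) v)
      = a ^ 2 * k * (d + k) * sampleCov u v
        + a ^ 2 * k * d * (sampleMean u * sampleMean v) := by
  classical
  have hd0 : (d:ℝ) ≠ 0 := by
    have : (0:ℝ) < d := by exact_mod_cast lt_of_lt_of_le two_pos hd
    exact this.ne'
  have hd1 : (d:ℝ) - 1 ≠ 0 := by
    have : (2:ℝ) ≤ d := by exact_mod_cast hd
    intro h; linarith
  -- the entries as an indexed family
  set X : Fin k × Fin d → Ω → ℝ := fun p ω => B ω p.1 p.2 with hX
  have hXm : ∀ p : Fin k × Fin d, Measurable (X p) := fun p => hmeas p.1 p.2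
  have hE4 := E4 X hindep hXm (fun p => hgauss p.1 p.2)
  -- the Gram matrix entries
  set S : Fin d → Fin d → Ω → ℝ := fun m n ω => ∑ j, B ω j m * B ω j n with hS
  have hSpt : ∀ (m n p q : Fin d) ω, S m n ω * S p q ω
      = ∑ j, ∑ j', X (j,m) ω * X (j,n) ω * X (j',p) ω * X (j',q) ω := by
    intro m n p q ω
    rw [hS]
    rw [Finset.sum_mul_sum]
    exact Finset.sum_congr rfl fun j _ => Finset.sum_congr rfl fun j' _ => by ring
  have hSint : ∀ m n p q : Fin d, Integrable (fun ω => S m n ω * S p q ω) ℙ := by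
    intro m n p q
    have h0 : Integrable (fun ω => ∑ j : Fin k, ∑ j' : Fin k,
        X (j,m) ω * X (j,n) ω * X (j',p) ω * X (j',q) ω) ℙ :=
      integrable_finset_sum _ fun j _ => integrable_finset_sum _ fun j' _ =>
        (hE4 (j,m) (j,n) (j',p) (j',q)).1
    exact h0.congr (Filter.EventuallyEq.of_eq (funext fun ω => (hSpt m n p q ω).symm))
  have hSval : ∀ m n p q : Fin d, ∫ ω, S m n ω * S p q ω
      = (k:ℝ)^2 * ((if m = n then (1:ℝ) else 0) * (if p = q then 1 else 0))
        + k * ((if m = p then 1 else 0) * (if n = q then 1 else 0)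
          + (if m = q then 1 else 0) * (if n = p then 1 else 0)) := by
    intro m n p q
    have : ∫ ω, S m n ω * S p q ω = ∑ j, ∑ j', ∫ ω,
        X (j,m) ω * X (j,n) ω * X (j',p) ω * X (j',q) ω := by
      rw [show (fun ω => S m n ω * S p q ω) = fun ω => ∑ j, ∑ j',
          X (j,m) ω * X (j,n) ω * X (j',p) ω * X (j',q) ω from funext (hSpt m n p q)]
      rw [integral_finset_sum _ fun j _ => integrable_finset_sum _ fun j' _ =>
        (hE4 (j,m) (j,n) (j',p) (j',q)).1]
      exact Finset.sum_congr rfl fun j _ => integral_finset_sum _ fun j' _ =>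
        (hE4 (j,m) (j,n) (j',p) (j',q)).1
    rw [this]
    have hterm : ∀ j j' : Fin k, ∫ ω, X (j,m) ω * X (j,n) ω * X (j',p) ω * X (j',q) ω
        = (if m = n then (1:ℝ) else 0) * (if p = q then 1 else 0)
          + (if j = j' then (1:ℝ) else 0) * ((if m = p then 1 else 0) * (if n = q then 1 else 0)
            + (if m = q then 1 else 0) * (if n = p then 1 else 0)) := by
      intro j j'
      rw [(hE4 (j,m) (j,n) (j',p) (j',q)).2]
      simp only [Prod.mk.injEq, eq_self_iff_true, true_and, ite_and]
      by_cases hjj : j = j' <;> simp [hjj] <;> ring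
    rw [Finset.sum_congr rfl fun j _ => Finset.sum_congr rfl fun j' _ => hterm j j']
    simp [Finset.sum_add_distrib, Finset.sum_ite_eq, Finset.mul_sum, Finset.sum_const,
      Finset.card_univ]
    split_ifs <;> ring
  -- pointwise projection formula
  have hprojpt : ∀ ω (w : Fin d → ℝ) (m : Fin d), proj a (B ω) w m = a * ∑ n, S m n ω * w n := by
    intro ω w m
    simp [proj, Matrix.mulVec, Matrix.mul_apply, Matrix.transpose_apply, dotProduct, hS,
      Finset.sum_mul]
  -- expanded quantities
  set T1 : Ω → ℝ := fun ω => ∑ γ : Fin d × Fin d × Fin d,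
    u γ.2.1 * v γ.2.2 * (S γ.1 γ.2.1 ω * S γ.1 γ.2.2 ω) with hT1
  set T2 : Ω → ℝ := fun ω => ∑ γ : Fin d × Fin d × Fin d × Fin d,
    u γ.2.2.1 * v γ.2.2.2 * (S γ.1 γ.2.2.1 ω * S γ.2.1 γ.2.2.2 ω) with hT2
  have e1 : ∀ ω, (∑ m, proj a (B ω) u m * proj a (B ω) v m) = a^2 * T1 ω := by
    intro ω
    rw [hT1]
    simp only [Fintype.sum_prod_type]
    rw [Finset.mul_sum]
    refine Finset.sum_congr rfl fun m _ => ?_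
    rw [hprojpt, hprojpt]
    calc (a * ∑ n, S m n ω * u n) * (a * ∑ q, S m q ω * v q)
        = a^2 * ((∑ n, S m n ω * u n) * (∑ q, S m q ω * v q)) := by ring
      _ = a^2 * (∑ n, ∑ q, (S m n ω * u n) * (S m q ω * v q)) := by rw [Finset.sum_mul_sum]
      _ = a^2 * ∑ n, ∑ q, u n * v q * (S m n ω * S m q ω) := by
          congr 1
          exact Finset.sum_congr rfl fun n _ => Finset.sum_congr rfl fun q _ => by ring
  have e2 : ∀ ω, T2 ω = (∑ m, ∑ n, S m n ω * u n) * (∑ p, ∑ q, S p q ω * v q) := by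
    intro ω
    rw [hT2]
    simp only [Fintype.sum_prod_type]
    conv_rhs => rw [Finset.sum_mul_sum]
    refine Finset.sum_congr rfl fun m _ => ?_
    refine Finset.sum_congr rfl fun p _ => ?_
    rw [Finset.sum_mul_sum]
    refine Finset.sum_congr rfl fun n _ => ?_
    exact Finset.sum_congr rfl fun q _ => by ring
  have hgpt : ∀ ω, sampleCov (proj a (B ω) u) (proj a (B ω) v)
      = (a^2/((d:ℝ)-1)) * T1 ω - (a^2/((d:ℝ)*((d:ℝ)-1))) * T2 ω := by
    intro ω
    rw [sampleCov_eq hd0]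
    unfold sampleMean
    rw [e1]
    have hU : (∑ m, proj a (B ω) u m) = a * (∑ m, ∑ n, S m n ω * u n) := by
      rw [Finset.mul_sum]
      exact Finset.sum_congr rfl fun m _ => hprojpt ω u m
    have hV : (∑ m, proj a (B ω) v m) = a * (∑ p, ∑ q, S p q ω * v q) := by
      rw [Finset.mul_sum]
      exact Finset.sum_congr rfl fun m _ => hprojpt ω v m
    rw [hU, hV, e2]
    field_simp
  -- integrability of the expanded quantities
  have hT1int : Integrable T1 ℙ := by
    rw [hT1]
    exact integrable_finset_sum _ fun γ _ => (hSint γ.1 γ.2.1 γ.1 γ.2.2).const_mul _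
  have hT2int : Integrable T2 ℙ := by
    rw [hT2]
    exact integrable_finset_sum _ fun γ _ => (hSint γ.1 γ.2.2.1 γ.2.1 γ.2.2.2).const_mul _
  -- compute the integral
  have hsplit : ∫ ω, sampleCov (proj a (B ω) u) (proj a (B ω) v)
      = (a^2/((d:ℝ)-1)) * (∫ ω, T1 ω) - (a^2/((d:ℝ)*((d:ℝ)-1))) * (∫ ω, T2 ω) := by
    rw [show (fun ω => sampleCov (proj a (B ω) u) (proj a (B ω) v))
      = fun ω => (a^2/((d:ℝ)-1)) * T1 ω - (a^2/((d:ℝ)*((d:ℝ)-1))) * T2 ω from funext hgpt]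
    rw [integral_sub (hT1int.const_mul _) (hT2int.const_mul _),
      MeasureTheory.integral_const_mul, MeasureTheory.integral_const_mul]
  have hIT1 : ∫ ω, T1 ω = ((k:ℝ)^2 + k) * (∑ m, u m * v m) + k * d * (∑ m, u m * v m) := by
    rw [hT1, integral_finset_sum _ fun γ _ => (hSint γ.1 γ.2.1 γ.1 γ.2.2).const_mul _]
    have : ∀ γ : Fin d × Fin d × Fin d, ∫ ω, u γ.2.1 * v γ.2.2 * (S γ.1 γ.2.1 ω * S γ.1 γ.2.2 ω)
        = u γ.2.1 * v γ.2.2 * ((k:ℝ)^2 * ((if γ.1 = γ.2.1 then (1:ℝ) else 0) * (if γ.1 = γ.2.2 then 1 else 0))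
          + k * ((if (γ.1 : Fin d) = γ.1 then (1:ℝ) else 0) * (if γ.2.1 = γ.2.2 then 1 else 0)
            + (if γ.1 = γ.2.2 then 1 else 0) * (if γ.2.1 = γ.1 then 1 else 0))) := by
      intro γ
      rw [MeasureTheory.integral_const_mul, hSval]
    rw [Finset.sum_congr rfl fun γ _ => this γ]
    simp only [Fintype.sum_prod_type, if_pos rfl]
    simp only [mul_add, mul_ite, mul_zero, mul_one, ite_mul, zero_mul,
      Finset.sum_add_distrib, Finset.sum_ite_eq, Finset.sum_ite_eq', Finset.sum_ite_irrel,
      Finset.sum_const_zero, Finset.mem_univ, if_true, Finset.sum_const, Finset.card_univ,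
      Fintype.card_fin, nsmul_eq_mul]
    simp only [← Finset.sum_add_distrib, Finset.mul_sum]
    exact Finset.sum_congr rfl fun m _ => by ring
  have hIT2 : ∫ ω, T2 ω = (k:ℝ)^2 * (∑ m, ∑ n, u m * v n) + k * (∑ m, ∑ n, u n * v m) + k * d * (∑ m, u m * v m) := by
    rw [hT2, integral_finset_sum _ fun γ _ => (hSint γ.1 γ.2.2.1 γ.2.1 γ.2.2.2).const_mul _]
    have : ∀ γ : Fin d × Fin d × Fin d × Fin d,
        ∫ ω, u γ.2.2.1 * v γ.2.2.2 * (S γ.1 γ.2.2.1 ω * S γ.2.1 γ.2.2.2 ω)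
        = u γ.2.2.1 * v γ.2.2.2 * ((k:ℝ)^2 * ((if γ.1 = γ.2.2.1 then (1:ℝ) else 0) * (if γ.2.1 = γ.2.2.2 then 1 else 0))
          + k * ((if γ.1 = γ.2.1 then (1:ℝ) else 0) * (if γ.2.2.1 = γ.2.2.2 then 1 else 0)
            + (if γ.1 = γ.2.2.2 then 1 else 0) * (if γ.2.2.1 = γ.2.1 then 1 else 0))) := by
      intro γ
      rw [MeasureTheory.integral_const_mul, hSval]
    rw [Finset.sum_congr rfl fun γ _ => this γ]
    simp only [Fintype.sum_prod_type]
    simp only [mul_add, mul_ite, mul_zero, mul_one, ite_mul, zero_mul,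
      Finset.sum_add_distrib, Finset.sum_ite_eq, Finset.sum_ite_eq', Finset.sum_ite_irrel,
      Finset.sum_const_zero, Finset.mem_univ, if_true, Finset.sum_const, Finset.card_univ,
      Fintype.card_fin, nsmul_eq_mul]
    simp only [← Finset.sum_add_distrib, Finset.mul_sum]
    refine Finset.sum_congr rfl fun m _ => ?_
    have c1 : (∑ x, u m * v x * (k:ℝ)^2) = ∑ x, (k:ℝ)^2 * (u m * v x) :=
      Finset.sum_congr rfl fun x _ => by ring
    have c2 : (∑ x, u x * v m * (k:ℝ)) = ∑ x, (k:ℝ) * (u x * v m) :=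
      Finset.sum_congr rfl fun x _ => by ring
    rw [c1, c2, Finset.sum_add_distrib]
    ring
  -- final algebra
  have hsw : (∑ m, ∑ n, u n * v m) = (∑ n, u n) * (∑ m, v m) := by
    rw [Finset.sum_mul_sum, Finset.sum_comm]
  have hsw' : (∑ m, ∑ n, u m * v n) = (∑ n, u n) * (∑ m, v m) := by
    rw [Finset.sum_mul_sum]
  rw [hsplit, hIT1, hIT2, hsw, hsw', sampleCov_eq hd0 u v]
  unfold sampleMean
  field_simp
  ring
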